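/- Let μ and ν be probability measures on a finite measurable space. Then d_TV(ν, μ) ≤ sqrt(KL(ν ‖ μ)/2), where KL is the Kullback–Leibler divergence (in nats) and d_TV is total variation distance. -/

import Mathlib

open scoped BigOperators ENNReal

/-- Total variation distance between two prob. vectors on a finite space:
`(1/2) ∑ |ν x − μ x|`, equal to `sup_A |ν(A) − μ(A)|`. -/
noncomputable def finTV {α : Type*} [Fintype α] (ν μ : α → ℝ) : ℝ :=
  (∑ x, |ν x - μ x|) / 2

/-- Kullback–Leibler divergence in nats, with the convention that it is `+∞`
if `ν` is not absolutely continuous w.r.t. `μ`, and `0 log 0 = 0`. -/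
noncomputable def finKL {α : Type*} [Fintype α] (ν μ : α → ℝ) : ℝ≥0∞ :=
  if ∀ x, μ x = 0 → ν x = 0 then
    ENNReal.ofReal (∑ x, ν x * Real.log (ν x / μ x))
  else ⊤

/-- A probability vector on a finite space. -/
def IsProbVec {α : Type*} [Fintype α] (p : α → ℝ) : Prop :=
  (∀ x, 0 ≤ p x) ∧ ∑ x, p x = 1

namespace PinskerAux

noncomputable def kFun (t : ℝ) : ℝ := (t + 1) * Real.log t - 2 * (t - 1)

noncomputable def hFun (t : ℝ) : ℝ :=
  (2 * t + 4) * (t * Real.log t - t + 1) - 3 * (t - 1) ^ 2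

lemma hasDerivAt_kFun {t : ℝ} (ht : 0 < t) :
    HasDerivAt kFun (Real.log t + (t + 1) / t - 2) t := by
  have h1 : HasDerivAt (fun t : ℝ => t + 1) 1 t := (hasDerivAt_id t).add_const 1
  have h2 := h1.mul (Real.hasDerivAt_log ht.ne')
  have h3 : HasDerivAt (fun t : ℝ => 2 * (t - 1)) 2 t := by
    simpa using ((hasDerivAt_id t).sub_const 1).const_mul 2
  have := h2.sub h3
  refine this.congr_deriv ?_
  field_simp

lemma kFun_deriv_nonneg {t : ℝ} (ht : 0 < t) :
    0 ≤ Real.log t + (t + 1) / t - 2 := by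
  have h := Real.log_le_sub_one_of_pos (show (0:ℝ) < 1 / t by positivity)
  rw [Real.log_div one_ne_zero ht.ne', Real.log_one] at h
  have : (t + 1) / t = 1 + 1 / t := by field_simp
  rw [this]
  linarith

lemma kFun_mono : MonotoneOn kFun (Set.Ioi 0) := by
  apply monotoneOn_of_deriv_nonneg (convex_Ioi 0)
  · exact fun x hx => ((hasDerivAt_kFun hx).differentiableAt).continuousAt.continuousWithinAt
  · intro x hx
    rw [interior_Ioi] at hx
    exact ((hasDerivAt_kFun hx).differentiableAt).differentiableWithinAt
  · intro x hx
    rw [interior_Ioi] at hx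
    rw [(hasDerivAt_kFun hx).deriv]
    exact kFun_deriv_nonneg hx

lemma kFun_one : kFun 1 = 0 := by simp [kFun]

lemma hasDerivAt_hFun {t : ℝ} (ht : 0 < t) :
    HasDerivAt hFun (4 * kFun t) t := by
  have h1 : HasDerivAt (fun t : ℝ => 2 * t + 4) 2 t := by
    simpa using ((hasDerivAt_id t).const_mul 2).add_const 4
  have h2 : HasDerivAt (fun t : ℝ => t * Real.log t - t + 1) (Real.log t) t := by
    simpa using ((Real.hasDerivAt_mul_log ht.ne').sub (hasDerivAt_id t)).add_const 1
  have h3 : HasDerivAt (fun t : ℝ => 3 * (t - 1) ^ 2) (3 * (2 * (t - 1))) t := by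
    simpa using (((hasDerivAt_id t).sub_const 1).pow 2).const_mul 3
  have := (h1.mul h2).sub h3
  refine this.congr_deriv ?_
  unfold kFun
  ring

lemma hFun_nonneg {t : ℝ} (ht : 0 ≤ t) : 0 ≤ hFun t := by
  have h1 : hFun 1 = 0 := by simp [hFun]
  rcases le_or_gt t 1 with htl | htl
  · -- antitone on [0,1]
    have hanti : AntitoneOn hFun (Set.Icc 0 1) := by
      apply antitoneOn_of_deriv_nonpos (convex_Icc 0 1)
      · apply ContinuousOn.sub
        · exact ((continuous_const.mul continuous_id').add continuous_const).continuousOn.mul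
            (((Real.continuous_mul_log.sub continuous_id').add continuous_const).continuousOn)
        · fun_prop
      · intro x hx
        rw [interior_Icc] at hx
        exact ((hasDerivAt_hFun hx.1).differentiableAt).differentiableWithinAt
      · intro x hx
        rw [interior_Icc] at hx
        rw [(hasDerivAt_hFun hx.1).deriv]
        have : kFun x ≤ kFun 1 :=
          kFun_mono (Set.mem_Ioi.2 hx.1) (Set.mem_Ioi.2 one_pos) hx.2.le
        rw [kFun_one] at this
        linarith
    have := hanti (Set.mem_Icc.2 ⟨ht, htl⟩) (Set.mem_Icc.2 ⟨zero_le_one, le_refl 1⟩) htl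
    rw [h1] at this
    exact this
  · -- monotone on [1,∞)
    have hmono : MonotoneOn hFun (Set.Ici 1) := by
      apply monotoneOn_of_deriv_nonneg (convex_Ici 1)
      · exact fun x hx =>
          ((hasDerivAt_hFun (lt_of_lt_of_le one_pos hx)).differentiableAt).continuousAt.continuousWithinAt
      · intro x hx
        rw [interior_Ici] at hx
        exact ((hasDerivAt_hFun (lt_trans one_pos hx)).differentiableAt).differentiableWithinAt
      · intro x hx
        rw [interior_Ici] at hx
        rw [(hasDerivAt_hFun (lt_trans one_pos hx)).deriv]
        have : kFun 1 ≤ kFun x :=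
          kFun_mono (Set.mem_Ioi.2 one_pos) (Set.mem_Ioi.2 (lt_trans one_pos hx)) hx.le
        rw [kFun_one] at this
        linarith
    have := hmono (Set.mem_Ici.2 (le_refl 1)) (Set.mem_Ici.2 htl.le) htl.le
    rw [h1] at this
    exact this

/-- Pointwise inequality: `3(a-b)² ≤ (2a+4b)(a log(a/b) - a + b)`. -/
lemma pointwise {a b : ℝ} (ha : 0 ≤ a) (hb : 0 ≤ b) (hab : b = 0 → a = 0) :
    3 * (a - b) ^ 2 ≤ (2 * a + 4 * b) * (a * Real.log (a / b) - a + b) := by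
  rcases hb.eq_or_lt with hb0 | hb0
  · rw [hab hb0.symm, ← hb0]
    norm_num
  · obtain ⟨t, rfl⟩ : ∃ t, a = b * t := ⟨a / b, by field_simp⟩
    have htnn : 0 ≤ t := nonneg_of_mul_nonneg_left (by linarith [ha]) hb0
    have htnn' : 0 ≤ t := htnn
    have hlog : Real.log (b * t / b) = Real.log t := by
      rw [mul_comm, mul_div_assoc, div_self hb0.ne', mul_one]
    have hmain := hFun_nonneg htnn
    unfold hFun at hmain
    have H := mul_le_mul_of_nonneg_left (by linarith : 3 * (t - 1) ^ 2 ≤ (2 * t + 4) * (t * Real.log t - t + 1)) (sq_nonneg b)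
    calc 3 * (b * t - b) ^ 2 = b ^ 2 * (3 * (t - 1) ^ 2) := by ring
      _ ≤ b ^ 2 * ((2 * t + 4) * (t * Real.log t - t + 1)) := H
      _ = (2 * (b * t) + 4 * b) * (b * t * Real.log t - b * t + b) := by ring
      _ = (2 * (b * t) + 4 * b) * (b * t * Real.log (b * t / b) - b * t + b) := by rw [hlog]

lemma sum_ineq {α : Type*} [Fintype α] (ν μ : α → ℝ) (hν : IsProbVec ν) (hμ : IsProbVec μ)
    (hac : ∀ x, μ x = 0 → ν x = 0) :
    (∑ x, |ν x - μ x|) ^ 2 ≤ 2 * ∑ x, ν x * Real.log (ν x / μ x) := by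
  classical
  set c : α → ℝ := fun x => 2 * ν x + 4 * μ x with hc
  set d : α → ℝ := fun x => ν x * Real.log (ν x / μ x) - ν x + μ x with hd
  have hcnn : ∀ x, 0 ≤ c x := fun x => by
    have := hν.1 x; have := hμ.1 x; simp only [hc]; linarith
  have hpt : ∀ x, 3 * (ν x - μ x) ^ 2 ≤ c x * d x := fun x =>
    pointwise (hν.1 x) (hμ.1 x) (hac x)
  have hzero : ∀ x, c x = 0 → ν x = 0 ∧ μ x = 0 := fun x hx => by
    have h1 := hν.1 x; have h2 := hμ.1 x
    simp only [hc] at hx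
    constructor <;> linarith
  have CS := Finset.sum_mul_sq_le_sq_mul_sq Finset.univ
    (fun x => Real.sqrt (c x)) (fun x => |ν x - μ x| / Real.sqrt (c x))
  have hfg : ∀ x : α, Real.sqrt (c x) * (|ν x - μ x| / Real.sqrt (c x)) = |ν x - μ x| := by
    intro x
    rcases eq_or_lt_of_le (hcnn x) with h0 | h0
    · obtain ⟨h1, h2⟩ := hzero x h0.symm
      simp [h1, h2]
    · rw [mul_div_cancel₀]
      exact (Real.sqrt_pos.2 h0).ne'
  have hf2 : ∀ x : α, Real.sqrt (c x) ^ 2 = c x := fun x => Real.sq_sqrt (hcnn x)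
  have hg2 : ∀ x : α, (|ν x - μ x| / Real.sqrt (c x)) ^ 2 = (ν x - μ x) ^ 2 / c x := by
    intro x
    rw [div_pow, sq_abs, Real.sq_sqrt (hcnn x)]
  have hsumc : ∑ x, c x = 6 := by
    simp only [hc]
    rw [Finset.sum_add_distrib, ← Finset.mul_sum, ← Finset.mul_sum, hν.2, hμ.2]
    norm_num
  have hsumd : ∑ x, d x = ∑ x, ν x * Real.log (ν x / μ x) := by
    simp only [hd]
    rw [Finset.sum_add_distrib, Finset.sum_sub_distrib, hν.2, hμ.2]
    ring
  have hgd : ∀ x : α, (ν x - μ x) ^ 2 / c x ≤ d x / 3 := by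
    intro x
    rcases eq_or_lt_of_le (hcnn x) with h0 | h0
    · obtain ⟨h1, h2⟩ := hzero x h0.symm
      simp [← h0, hd, h1, h2]
    · rw [div_le_div_iff₀ h0 (by norm_num : (0:ℝ) < 3)]
      nlinarith [hpt x]
  calc (∑ x, |ν x - μ x|) ^ 2
      = (∑ x, Real.sqrt (c x) * (|ν x - μ x| / Real.sqrt (c x))) ^ 2 := by
        congr 1; exact (Finset.sum_congr rfl fun x _ => hfg x).symm
    _ ≤ (∑ x, Real.sqrt (c x) ^ 2) * ∑ x, (|ν x - μ x| / Real.sqrt (c x)) ^ 2 := CS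
    _ = 6 * ∑ x, (ν x - μ x) ^ 2 / c x := by
        rw [Finset.sum_congr rfl fun x _ => hf2 x, hsumc,
          Finset.sum_congr rfl fun x _ => hg2 x]
    _ ≤ 6 * ∑ x, d x / 3 := by
        have := Finset.sum_le_sum fun x (_ : x ∈ Finset.univ) => hgd x
        linarith
    _ = 2 * ∑ x, ν x * Real.log (ν x / μ x) := by
        rw [← Finset.sum_div, hsumd]; ring

end PinskerAux

/-- Pinsker's inequality: `d_TV(ν, μ) ≤ sqrt(KL(ν‖μ)/2)`. -/
theorem pinsker {α : Type*} [Fintype α] (ν μ : α → ℝ)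
    (hν : IsProbVec ν) (hμ : IsProbVec μ) :
    ENNReal.ofReal (finTV ν μ) ≤ (finKL ν μ / 2) ^ (1/2 : ℝ) := by
  unfold finKL
  by_cases hac : ∀ x, μ x = 0 → ν x = 0
  · rw [if_pos hac]
    set S := ∑ x, ν x * Real.log (ν x / μ x) with hS
    have hsum := PinskerAux.sum_ineq ν μ hν hμ hac
    have hTVnn : 0 ≤ finTV ν μ := by
      unfold finTV
      positivity
    have hS2 : finTV ν μ ^ 2 ≤ S / 2 := by
      unfold finTV
      rw [div_pow]
      rw [← hS] at hsum
      linarith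
    have hSnn : 0 ≤ S := by nlinarith [sq_nonneg (finTV ν μ)]
    have hreal : finTV ν μ ≤ (S / 2) ^ (1/2 : ℝ) := by
      rw [← Real.sqrt_eq_rpow]
      exact (Real.le_sqrt hTVnn (by positivity)).2 hS2
    calc ENNReal.ofReal (finTV ν μ)
        ≤ ENNReal.ofReal ((S / 2) ^ (1/2 : ℝ)) := ENNReal.ofReal_le_ofReal hreal
      _ = ENNReal.ofReal (S / 2) ^ (1/2 : ℝ) :=
          (ENNReal.ofReal_rpow_of_nonneg (x := S/2) (p := 1/2) (by positivity) (by norm_num)).symm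
      _ = (ENNReal.ofReal S / 2) ^ (1/2 : ℝ) := by
          rw [ENNReal.ofReal_div_of_pos two_pos, ENNReal.ofReal_ofNat]
  · rw [if_neg hac]
    have h2 : (⊤ : ℝ≥0∞) / 2 = ⊤ := ENNReal.top_div_of_ne_top (by norm_num)
    rw [h2, ENNReal.top_rpow_of_pos (by norm_num)]
    exact le_top
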